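/- In the CAR algebra A over Z^ν: for an infinite subset I, the commutant of the even part A(I)₊ in A equals A(I^c). -/

import Mathlib

/-- The C*-subalgebra `A(I)` of the CAR algebra associated to a region `I ⊆ ℤ^ν`. -/
noncomputable def carSub {ν : ℕ} {A : Type*} [CStarAlgebra A]
    (a : (Fin ν → ℤ) → A) (I : Set (Fin ν → ℤ)) : StarSubalgebra ℂ A :=
  (StarAlgebra.adjoin ℂ (a '' I)).topologicalClosure

section Car
variable {ν : ℕ} {A : Type*} [CStarAlgebra A]

abbrev CarSite (ν : ℕ) := (Fin ν → ℤ) × Bool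

/-- Self-adjoint Clifford generators `c i = a i + (a i)*` and `d i = I • (a i - (a i)*)`. -/
noncomputable def carGen (a : (Fin ν → ℤ) → A) : CarSite ν → A :=
  fun g => if g.2 then Complex.I • (a g.1 - star (a g.1)) else a g.1 + star (a g.1)

variable {a : (Fin ν → ℤ) → A}

lemma carGen_eq (i : Fin ν → ℤ) (b : Bool) :
    carGen a (i, b) = (if b then Complex.I else 1) • a i +
      (if b then -Complex.I else 1) • star (a i) := by
  cases b
  · show a i + star (a i) = (1 : ℂ) • a i + (1 : ℂ) • star (a i)
    simp
  · show Complex.I • (a i - star (a i)) = Complex.I • a i + (-Complex.I) • star (a i)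
    rw [smul_sub, neg_smul, sub_eq_add_neg]

lemma carGen_star (g : CarSite ν) : star (carGen a g) = carGen a g := by
  rcases g with ⟨i, b⟩
  cases b
  · show star (a i + star (a i)) = a i + star (a i)
    rw [star_add, star_star, add_comm]
  · show star (Complex.I • (a i - star (a i))) = Complex.I • (a i - star (a i))
    rw [star_smul, star_sub, star_star]
    simp only [Complex.star_def, Complex.conj_I, neg_smul, ← smul_neg, neg_sub]

lemma car_half_zero {x : A} (h : x + x = 0) : x = 0 := by
  have hx : x = (2⁻¹ : ℂ) • (x + x) := by
    rw [← two_smul ℂ x, smul_smul]; norm_num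
  rw [hx, h, smul_zero]

private lemma car_expand (u z v w : A) (α β γ δ : ℂ) :
    (α • u + β • z) * (γ • v + δ • w) + (γ • v + δ • w) * (α • u + β • z)
      = (α * γ) • (u * v + v * u) + (α * δ) • (u * w + w * u) +
        (β * γ) • (z * v + v * z) + (β * δ) • (z * w + w * z) := by
  simp only [add_mul, mul_add, smul_mul_assoc, mul_smul_comm, smul_smul, smul_add]
  module

section CARrel
variable (hCAR₁ : ∀ i j, star (a i) * a j + a j * star (a i) = if i = j then (1 : A) else 0)
  (hCAR₂ : ∀ i j, a i * a j + a j * a i = 0)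

include hCAR₂ in
lemma car_star₂ : ∀ i j, star (a i) * star (a j) + star (a j) * star (a i) = 0 := by
  intro i j
  have := congrArg star (hCAR₂ j i)
  simpa [star_add, star_mul] using this

include hCAR₁ hCAR₂ in
lemma carGen_sq (g : CarSite ν) : carGen a g * carGen a g = 1 := by
  rcases g with ⟨i, b⟩
  have key : carGen a (i, b) * carGen a (i, b) + carGen a (i, b) * carGen a (i, b) = 1 + 1 := by
    rw [carGen_eq, car_expand]
    have h2 := hCAR₂ i i
    have h3 := car_star₂ hCAR₂ i i
    have h1 : star (a i) * a i + a i * star (a i) = 1 := by simpa using hCAR₁ i i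
    have h1' : a i * star (a i) + star (a i) * a i = 1 := by rw [add_comm]; exact h1
    rw [h2, h3, h1, h1']
    cases b <;> simp <;> module
  have := car_half_zero (x := carGen a (i, b) * carGen a (i, b) - 1) (by
    have : carGen a (i, b) * carGen a (i, b) - 1 + (carGen a (i, b) * carGen a (i, b) - 1)
        = (carGen a (i, b) * carGen a (i, b) + carGen a (i, b) * carGen a (i, b)) - (1 + 1) := by
      abel
    rw [this, key, sub_self])
  exact sub_eq_zero.mp this

include hCAR₁ hCAR₂ in
lemma carGen_anticomm {g h : CarSite ν} (hgh : g ≠ h) :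
    carGen a g * carGen a h = -(carGen a h * carGen a g) := by
  rcases g with ⟨i, bi⟩; rcases h with ⟨j, bj⟩
  apply eq_neg_of_add_eq_zero_left
  rw [carGen_eq, carGen_eq, car_expand]
  rcases eq_or_ne i j with rfl | hij
  · have hb : bi ≠ bj := fun hb => hgh (by rw [hb])
    have h2 := hCAR₂ i i
    have h3 := car_star₂ hCAR₂ i i
    have h1 : star (a i) * a i + a i * star (a i) = 1 := by simpa using hCAR₁ i i
    have h1' : a i * star (a i) + star (a i) * a i = 1 := by rw [add_comm]; exact h1
    rw [h2, h3, h1, h1']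
    cases bi <;> cases bj <;> simp at hb ⊢ <;> module
  · have e1 := hCAR₂ i j
    have e2 : star (a i) * a j + a j * star (a i) = 0 := by
      simpa [if_neg hij] using hCAR₁ i j
    have e2' : a j * star (a i) + star (a i) * a j = 0 := by rw [add_comm]; exact e2
    have e3 : star (a j) * a i + a i * star (a j) = 0 := by
      simpa [if_neg (Ne.symm hij)] using hCAR₁ j i
    have e3' : a i * star (a j) + star (a j) * a i = 0 := by rw [add_comm]; exact e3
    have e4 := car_star₂ hCAR₂ i j
    rw [e1, e3', e2, e4]
    simp

include hCAR₁ hCAR₂ in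
lemma carGen_comm_prod (g : CarSite ν) (l : List (CarSite ν)) :
    carGen a g * (l.map (carGen a)).prod =
      ((-1 : ℂ) ^ (l.length + l.count g)) • ((l.map (carGen a)).prod * carGen a g) := by
  induction l with
  | nil => simp
  | cons h t ih =>
    simp only [List.map_cons, List.prod_cons, List.length_cons, List.count_cons]
    rcases eq_or_ne h g with rfl | hne
    · have he : ((-1 : ℂ) ^ (t.length + 1 + (t.count h + 1)) * (-1 : ℂ) ^ (t.length + t.count h))
          = 1 := by
        rw [← pow_add]
        exact Even.neg_one_pow ⟨t.length + t.count h + 1, by ring⟩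
      rw [if_pos (by simp), ← mul_assoc, carGen_sq hCAR₁ hCAR₂, one_mul, ih, smul_mul_assoc,
        mul_assoc, carGen_sq hCAR₁ hCAR₂, mul_one, smul_smul, he, one_smul]
    · rw [if_neg (by simpa using hne), add_zero, ← mul_assoc,
        carGen_anticomm hCAR₁ hCAR₂ (fun hc => hne hc.symm), neg_mul, mul_assoc, ih,
        mul_smul_comm, ← neg_smul, mul_assoc]
      congr 1
      have heq : t.length + 1 + t.count g = (t.length + t.count g) + 1 := by omega
      rw [heq, pow_succ]
      ring

include hCAR₁ hCAR₂ in
lemma carGen_conj_prod (g : CarSite ν) (l : List (CarSite ν)) :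
    carGen a g * (l.map (carGen a)).prod * carGen a g =
      ((-1 : ℂ) ^ (l.length + l.count g)) • (l.map (carGen a)).prod := by
  rw [carGen_comm_prod hCAR₁ hCAR₂, smul_mul_assoc, mul_assoc, carGen_sq hCAR₁ hCAR₂, mul_one]

include hCAR₁ hCAR₂ in
lemma carGen_norm_le (g : CarSite ν) : ‖carGen a g‖ ≤ 1 := by
  have h1 : ‖(1 : A)‖ * ‖(1 : A)‖ = ‖(1 : A)‖ := by
    conv_rhs => rw [show (1 : A) = star (1 : A) * 1 by simp]
    rw [CStarRing.norm_star_mul_self]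
  have h1' : ‖(1 : A)‖ ≤ 1 := by nlinarith [norm_nonneg (1 : A)]
  have h2 : ‖carGen a g‖ * ‖carGen a g‖ = ‖(1 : A)‖ := by
    rw [← CStarRing.norm_star_mul_self (x := carGen a g), carGen_star,
      carGen_sq hCAR₁ hCAR₂]
  nlinarith [norm_nonneg (carGen a g)]

omit hCAR₁ hCAR₂ in
/-- Membership of the generators in the adjoins. -/
lemma carGen_mem_adjoin {S : Set (Fin ν → ℤ)} {g : CarSite ν} (hg : g.1 ∈ S) :
    carGen a g ∈ StarAlgebra.adjoin ℂ (a '' S) := by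
  have ha : a g.1 ∈ StarAlgebra.adjoin ℂ (a '' S) :=
    StarAlgebra.subset_adjoin ℂ _ ⟨g.1, hg, rfl⟩
  rcases g with ⟨i, b⟩
  cases b
  · exact add_mem ha (star_mem ha)
  · exact SMulMemClass.smul_mem _ (sub_mem ha (star_mem ha))

omit hCAR₁ hCAR₂ in
lemma car_a_eq (i : Fin ν → ℤ) :
    a i = (2⁻¹ : ℂ) • (carGen a (i, false) - Complex.I • carGen a (i, true)) := by
  show a i = (2⁻¹ : ℂ) • (a i + star (a i) - Complex.I • (Complex.I • (a i - star (a i))))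
  rw [smul_smul, Complex.I_mul_I, neg_smul, one_smul, sub_neg_eq_add]
  match_scalars <;> norm_num

/-- Aux: a list with at least two copies of `g` splits as `u ++ g :: v ++ g :: w`. -/
lemma car_two_count_split {α : Type*} [BEq α] [LawfulBEq α] {g : α} :
    ∀ (l : List α), 2 ≤ l.count g → ∃ u v w : List α, l = u ++ g :: (v ++ g :: w)
  | [], h => by simp at h
  | h :: t, hc => by
    rcases eq_or_ne h g with rfl | hne
    · have : 1 ≤ t.count h := by
        have h1 : (h :: t).count h = t.count h + 1 := by simp [List.count_cons]
        omega
      have hmem : h ∈ t := List.count_pos_iff.mp (by omega)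
      obtain ⟨v, w, rfl⟩ := List.append_of_mem hmem
      exact ⟨[], v, w, rfl⟩
    · have : 2 ≤ t.count g := by
        have : (h :: t).count g = t.count g + if h == g then 1 else 0 := List.count_cons
        rw [if_neg (by simpa using hne)] at this
        omega
      obtain ⟨u, v, w, rfl⟩ := car_two_count_split t this
      exact ⟨h :: u, v, w, rfl⟩

omit hCAR₁ hCAR₂ in
lemma car_prod_mem {S : Set (Fin ν → ℤ)} :
    ∀ (l : List (CarSite ν)), (∀ g ∈ l, g.1 ∈ S) →
      (l.map (carGen a)).prod ∈ StarAlgebra.adjoin ℂ (a '' S)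
  | [], _ => by
    rw [List.map_nil, List.prod_nil]; exact one_mem _
  | h :: t, hl => by
    rw [List.map_cons, List.prod_cons]
    exact mul_mem (carGen_mem_adjoin (hl h (by simp)))
      (car_prod_mem t fun g hg => hl g (by simp [hg]))

include hCAR₁ hCAR₂ in
lemma car_prod_mem_compl (I : Set (Fin ν → ℤ)) (l : List (CarSite ν))
    (hcount : ∀ g ∈ l, g.1 ∈ I → Even (l.count g)) :
    (l.map (carGen a)).prod ∈ StarAlgebra.adjoin ℂ (a '' Iᶜ) := by
  generalize hn : l.length = n
  induction n using Nat.strong_induction_on generalizing l with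
  | _ n IH =>
    by_cases hex : ∃ g ∈ l, g.1 ∈ I
    · obtain ⟨g, hgl, hgI⟩ := hex
      have h2 : 2 ≤ l.count g := by
        have h1 : l.count g ≠ 0 := fun h0 => (List.count_eq_zero.mp h0) hgl
        rcases hcount g hgl hgI with ⟨r, hr⟩
        omega
      obtain ⟨u, v, w, rfl⟩ := car_two_count_split l h2
      set l' := u ++ (v ++ w) with hl'
      have hcntg : (u ++ g :: (v ++ g :: w)).count g = l'.count g + 2 := by
        simp only [hl', List.count_append, List.count_cons]
        simp
        omega
      have hcnt' : ∀ h : CarSite ν, h ≠ g → (u ++ g :: (v ++ g :: w)).count h = l'.count h := by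
        intro h hne
        simp only [hl', List.count_append, List.count_cons]
        simp [hne, Ne.symm hne]
      have hassoc : carGen a g * ((v.map (carGen a)).prod * (carGen a g * (w.map (carGen a)).prod))
          = (carGen a g * (v.map (carGen a)).prod * carGen a g) * (w.map (carGen a)).prod := by
        noncomm_ring
      have hprod : ((u ++ g :: (v ++ g :: w)).map (carGen a)).prod
          = ((-1 : ℂ) ^ (v.length + v.count g)) • (l'.map (carGen a)).prod := by
        simp only [List.map_append, List.prod_append, List.map_cons, List.prod_cons, hl']
        rw [hassoc, carGen_conj_prod hCAR₁ hCAR₂, smul_mul_assoc, mul_smul_comm]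
      rw [hprod]
      apply SMulMemClass.smul_mem
      have hlen : l'.length < n := by
        rw [← hn, hl']
        simp
      apply IH l'.length hlen l' _ rfl
      intro h hh hhI
      have hhl : h ∈ u ++ g :: (v ++ g :: w) := by
        simp only [hl', List.mem_append] at hh
        simp only [List.mem_append, List.mem_cons]
        tauto
      rcases hcount h hhl hhI with ⟨r, hr⟩
      rcases eq_or_ne h g with rfl | hne
      · have := hcntg
        exact ⟨r - 1, by omega⟩
      · have := hcnt' h hne
        exact ⟨r, by omega⟩
    · push_neg at hex
      exact car_prod_mem l fun g hg => hex g hg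

/-- Monomials in the Clifford generators over a finite region `F`. -/
def carProds (a : (Fin ν → ℤ) → A) (F : Finset (Fin ν → ℤ)) : Set A :=
  {x | ∃ l : List (CarSite ν), (∀ g ∈ l, g.1 ∈ F) ∧ x = (l.map (carGen a)).prod}

omit hCAR₁ hCAR₂ in
lemma carProds_mono {F F' : Finset (Fin ν → ℤ)} (h : F ⊆ F') : carProds a F ⊆ carProds a F' :=
  fun _ ⟨l, hl, hx⟩ => ⟨l, fun g hg => h (hl g hg), hx⟩

omit hCAR₁ hCAR₂ in
lemma car_star_prod : ∀ l : List (CarSite ν),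
    star ((l.map (carGen a)).prod) = ((l.reverse).map (carGen a)).prod
  | [] => by simp
  | h :: t => by
    rw [List.map_cons, List.prod_cons, star_mul, car_star_prod t, carGen_star,
      List.reverse_cons, List.map_append, List.prod_append]
    simp

omit hCAR₁ hCAR₂ in
lemma car_span_star {F : Finset (Fin ν → ℤ)} {x : A}
    (h : x ∈ Submodule.span ℂ (carProds a F)) :
    star x ∈ Submodule.span ℂ (carProds a F) := by
  induction h using Submodule.span_induction with
  | mem z hz =>
    obtain ⟨l, hl, rfl⟩ := hz
    rw [car_star_prod]
    exact Submodule.subset_span ⟨l.reverse, fun g hg => hl g (List.mem_reverse.mp hg), rfl⟩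
  | zero => simpa using zero_mem _
  | add z w _ _ ihz ihw => simpa [star_add] using add_mem ihz ihw
  | smul r z _ ihz => simpa [star_smul] using SMulMemClass.smul_mem _ ihz


omit hCAR₁ hCAR₂ in
lemma car_mem_span_prods (q : A) (hq : q ∈ StarAlgebra.adjoin ℂ (a '' Set.univ)) :
    ∃ F : Finset (Fin ν → ℤ), q ∈ Submodule.span ℂ (carProds a F) := by
  induction hq using StarAlgebra.adjoin_induction with
  | mem x hx =>
    obtain ⟨i, -, rfl⟩ := hx
    refine ⟨{i}, ?_⟩
    rw [car_a_eq (a := a) i]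
    refine SMulMemClass.smul_mem _ (sub_mem ?_ (SMulMemClass.smul_mem _ ?_))
    · exact Submodule.subset_span ⟨[(i, false)], by simp, by simp⟩
    · exact Submodule.subset_span ⟨[(i, true)], by simp, by simp⟩
  | algebraMap r =>
    refine ⟨∅, ?_⟩
    have : algebraMap ℂ A r = r • (1 : A) := by
      rw [Algebra.algebraMap_eq_smul_one]
    rw [this]
    exact SMulMemClass.smul_mem _ (Submodule.subset_span ⟨[], by simp, by simp⟩)
  | add x y hx hy ihx ihy =>
    obtain ⟨F₁, h₁⟩ := ihx
    obtain ⟨F₂, h₂⟩ := ihy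
    exact ⟨F₁ ∪ F₂, add_mem
      (Submodule.span_mono (carProds_mono Finset.subset_union_left) h₁)
      (Submodule.span_mono (carProds_mono Finset.subset_union_right) h₂)⟩
  | mul x y hx hy ihx ihy =>
    obtain ⟨F₁, h₁⟩ := ihx
    obtain ⟨F₂, h₂⟩ := ihy
    refine ⟨F₁ ∪ F₂, ?_⟩
    have hmul : x * y ∈ Submodule.span ℂ (carProds a F₁) * Submodule.span ℂ (carProds a F₂) :=
      Submodule.mul_mem_mul h₁ h₂
    rw [Submodule.span_mul_span] at hmul
    refine Submodule.span_mono ?_ hmul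
    rintro z ⟨z₁, hz₁, z₂, hz₂, rfl⟩
    obtain ⟨l₁, hl₁, rfl⟩ := hz₁
    obtain ⟨l₂, hl₂, rfl⟩ := hz₂
    exact ⟨l₁ ++ l₂, by
      intro g hg
      rcases List.mem_append.mp hg with h | h
      · exact Finset.mem_union_left _ (hl₁ g h)
      · exact Finset.mem_union_right _ (hl₂ g h), by simp⟩
  | star x hx ihx =>
    obtain ⟨F, h⟩ := ihx
    exact ⟨F, car_span_star h⟩

/-- Averaging map over a list of generators, with sign twist `σ`. -/
noncomputable def carAvg (a : (Fin ν → ℤ) → A) (σ : ℂ) : List (CarSite ν) → A → A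
  | [], z => z
  | g :: t, z => (2⁻¹ : ℂ) • (carAvg a σ t z + σ • (carGen a g * carAvg a σ t z * carGen a g))

omit hCAR₁ hCAR₂ in
lemma carAvg_sub (σ : ℂ) (l : List (CarSite ν)) (z w : A) :
    carAvg a σ l (z - w) = carAvg a σ l z - carAvg a σ l w := by
  induction l with
  | nil => rfl
  | cons g t ih =>
    show (2⁻¹ : ℂ) • (carAvg a σ t (z - w) +
        σ • (carGen a g * carAvg a σ t (z - w) * carGen a g)) = _
    rw [ih]
    show _ = (2⁻¹ : ℂ) • (carAvg a σ t z + σ • (carGen a g * carAvg a σ t z * carGen a g)) -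
      (2⁻¹ : ℂ) • (carAvg a σ t w + σ • (carGen a g * carAvg a σ t w * carGen a g))
    simp only [mul_sub, sub_mul, smul_sub, smul_add]
    abel

omit hCAR₁ hCAR₂ in
lemma carAvg_smul (σ : ℂ) (l : List (CarSite ν)) (r : ℂ) (z : A) :
    carAvg a σ l (r • z) = r • carAvg a σ l z := by
  induction l with
  | nil => rfl
  | cons g t ih =>
    show (2⁻¹ : ℂ) • (carAvg a σ t (r • z) +
        σ • (carGen a g * carAvg a σ t (r • z) * carGen a g)) = r • ((2⁻¹ : ℂ) • _)
    rw [ih]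
    simp only [mul_smul_comm, smul_mul_assoc, smul_add, smul_smul]
    match_scalars <;> ring

omit hCAR₁ hCAR₂ in
lemma carAvg_add (σ : ℂ) (l : List (CarSite ν)) (z w : A) :
    carAvg a σ l (z + w) = carAvg a σ l z + carAvg a σ l w := by
  induction l with
  | nil => rfl
  | cons g t ih =>
    show (2⁻¹ : ℂ) • (carAvg a σ t (z + w) +
        σ • (carGen a g * carAvg a σ t (z + w) * carGen a g)) = _
    rw [ih]
    show _ = (2⁻¹ : ℂ) • (carAvg a σ t z + σ • (carGen a g * carAvg a σ t z * carGen a g)) +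
      (2⁻¹ : ℂ) • (carAvg a σ t w + σ • (carGen a g * carAvg a σ t w * carGen a g))
    simp only [mul_add, add_mul, smul_add]
    abel

omit hCAR₁ hCAR₂ in
lemma carAvg_norm_le (σ : ℂ) (hσ : ‖σ‖ ≤ 1) (l : List (CarSite ν))
    (hl : ∀ g ∈ l, ‖carGen a g‖ ≤ 1) (z : A) :
    ‖carAvg a σ l z‖ ≤ ‖z‖ := by
  induction l with
  | nil => exact le_refl _
  | cons g t ih =>
    have iht := ih fun g hg => hl g (List.mem_cons_of_mem _ hg)
    have hg1 : ‖carGen a g‖ ≤ 1 := hl g List.mem_cons_self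
    show ‖(2⁻¹ : ℂ) • (carAvg a σ t z + σ • (carGen a g * carAvg a σ t z * carGen a g))‖ ≤ ‖z‖
    set w := carAvg a σ t z
    have h2 : ‖(2⁻¹ : ℂ)‖ = 2⁻¹ := by
      rw [norm_inv]
      simp
    have hconj : ‖carGen a g * w * carGen a g‖ ≤ ‖w‖ := by
      calc ‖carGen a g * w * carGen a g‖ ≤ ‖carGen a g * w‖ * ‖carGen a g‖ := norm_mul_le _ _
        _ ≤ ‖carGen a g‖ * ‖w‖ * ‖carGen a g‖ := by
            have := norm_mul_le (carGen a g) w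
            nlinarith [norm_nonneg (carGen a g), norm_nonneg w]
        _ ≤ ‖w‖ * ‖carGen a g‖ := by
            have step1 : ‖carGen a g‖ * ‖w‖ ≤ ‖w‖ := by
              nlinarith [norm_nonneg w, norm_nonneg (carGen a g)]
            exact mul_le_mul_of_nonneg_right step1 (norm_nonneg _)
        _ ≤ ‖w‖ := by nlinarith [norm_nonneg w]
    calc ‖(2⁻¹ : ℂ) • (w + σ • (carGen a g * w * carGen a g))‖
        = 2⁻¹ * ‖w + σ • (carGen a g * w * carGen a g)‖ := by rw [norm_smul, h2]
      _ ≤ 2⁻¹ * (‖w‖ + ‖σ‖ * ‖carGen a g * w * carGen a g‖) := by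
          have h3 := norm_add_le w (σ • (carGen a g * w * carGen a g))
          have h4 : ‖σ • (carGen a g * w * carGen a g)‖
              = ‖σ‖ * ‖carGen a g * w * carGen a g‖ := norm_smul _ _
          nlinarith
      _ ≤ ‖w‖ := by nlinarith [norm_nonneg w, norm_nonneg σ,
          norm_nonneg (carGen a g * w * carGen a g)]
      _ ≤ ‖z‖ := iht

omit hCAR₁ hCAR₂ in
lemma carAvg_fix (σ : ℂ) (hσ2 : σ * σ = 1) (l : List (CarSite ν)) (z : A)
    (hz : ∀ g ∈ l, carGen a g * z * carGen a g = σ • z) :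
    carAvg a σ l z = z := by
  induction l with
  | nil => rfl
  | cons g t ih =>
    have iht := ih fun g hg => hz g (List.mem_cons_of_mem _ hg)
    show (2⁻¹ : ℂ) • (carAvg a σ t z + σ • (carGen a g * carAvg a σ t z * carGen a g)) = z
    rw [iht, hz g List.mem_cons_self, smul_smul, hσ2, one_smul, ← two_smul ℂ z,
      smul_smul]
    norm_num

include hCAR₁ hCAR₂ in
lemma carAvg_prod (σ : ℂ) (hσ : σ = 1 ∨ σ = -1) (gl l : List (CarSite ν)) :
    ∃ t : ℂ, carAvg a σ gl ((l.map (carGen a)).prod) = t • (l.map (carGen a)).prod ∧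
      (t ≠ 0 → ∀ g ∈ gl, σ * (-1 : ℂ) ^ (l.length + l.count g) = 1) := by
  induction gl with
  | nil => exact ⟨1, by simp [carAvg], fun _ g hg => absurd hg List.not_mem_nil⟩
  | cons g tl ih =>
    obtain ⟨t, ht, hcond⟩ := ih
    set P := (l.map (carGen a)).prod
    set e := l.length + l.count g with he
    refine ⟨2⁻¹ * (t * (1 + σ * (-1 : ℂ) ^ e)), ?_, ?_⟩
    · show (2⁻¹ : ℂ) • (carAvg a σ tl P + σ • (carGen a g * carAvg a σ tl P * carGen a g)) = _
      rw [ht, mul_smul_comm, smul_mul_assoc, carGen_conj_prod hCAR₁ hCAR₂]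
      match_scalars
      ring
    · intro hne h hh
      have ht0 : t ≠ 0 := fun h0 => hne (by rw [h0]; ring)
      rcases List.mem_cons.mp hh with rfl | hmem
      · have hfac : (1 : ℂ) + σ * (-1 : ℂ) ^ e ≠ 0 := fun h0 => hne (by rw [h0]; ring)
        have : σ * (-1 : ℂ) ^ e = 1 ∨ σ * (-1 : ℂ) ^ e = -1 := by
          rcases hσ with rfl | rfl <;> rcases Nat.even_or_odd e with hp | hp
          · exact Or.inl (by rw [hp.neg_one_pow]; ring)
          · exact Or.inr (by rw [hp.neg_one_pow]; ring)
          · exact Or.inr (by rw [hp.neg_one_pow]; ring)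
          · exact Or.inl (by rw [hp.neg_one_pow]; ring)
        rcases this with h1 | h1
        · exact h1
        · exact absurd (by rw [h1]; ring) hfac
      · exact hcond ht0 h hmem

end CARrel
end Car

section Main
variable {ν : ℕ} {A : Type*} [CStarAlgebra A] {a : (Fin ν → ℤ) → A}
variable (hCAR₁ : ∀ i j, star (a i) * a j + a j * star (a i) = if i = j then (1 : A) else 0)
  (hCAR₂ : ∀ i j, a i * a j + a j * a i = 0)

include hCAR₁ hCAR₂ in
lemma car_mem_compl_of_conj (hgen : carSub a Set.univ = ⊤)
    (I : Set (Fin ν → ℤ)) (hI : I.Infinite)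
    (σ : ℂ) (hσ : σ = 1 ∨ σ = -1) (z : A)
    (hz : ∀ g : CarSite ν, g.1 ∈ I → carGen a g * z * carGen a g = σ • z) :
    z ∈ carSub a Iᶜ := by
  classical
  have hσ1 : ‖σ‖ ≤ 1 := by rcases hσ with rfl | rfl <;> simp
  have hσ2 : σ * σ = 1 := by rcases hσ with rfl | rfl <;> ring
  show z ∈ (StarAlgebra.adjoin ℂ (a '' Iᶜ)).topologicalClosure
  rw [← SetLike.mem_coe, StarSubalgebra.topologicalClosure_coe, Metric.mem_closure_iff]
  intro ε hε
  have hz_top : z ∈ closure (StarAlgebra.adjoin ℂ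
      (a '' (Set.univ : Set (Fin ν → ℤ))) : Set A) := by
    have h0 : z ∈ carSub a Set.univ := by rw [hgen]; exact StarSubalgebra.mem_top
    exact h0
  rw [Metric.mem_closure_iff] at hz_top
  obtain ⟨q, hq, hdq⟩ := hz_top ε hε
  obtain ⟨F, hqF⟩ := car_mem_span_prods q hq
  obtain ⟨i₀, hi₀⟩ := (hI.diff F.finite_toSet).nonempty
  set Λ : Finset (Fin ν → ℤ) := insert i₀ (F.filter (· ∈ I)) with hΛ
  have hΛI : ∀ i ∈ Λ, i ∈ I := by
    intro i hi
    rcases Finset.mem_insert.mp hi with rfl | hi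
    · exact hi₀.1
    · exact (Finset.mem_filter.mp hi).2
  set gl : List (CarSite ν) := Λ.toList.flatMap (fun i => [(i, false), (i, true)]) with hgl
  have hglmem : ∀ g : CarSite ν, g ∈ gl ↔ g.1 ∈ Λ := by
    intro g
    rw [hgl, List.mem_flatMap]
    constructor
    · rintro ⟨i, hi, hg⟩
      have : g = (i, false) ∨ g = (i, true) := by simpa using hg
      rcases this with rfl | rfl <;> exact Finset.mem_toList.mp hi
    · intro hgΛ
      exact ⟨g.1, Finset.mem_toList.mpr hgΛ, by
        rcases g with ⟨i, b⟩; cases b <;> simp⟩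
  -- the averaged approximant lies in the adjoin over the complement
  have havg : ∀ p, p ∈ Submodule.span ℂ (carProds a F) →
      carAvg a σ gl p ∈ StarAlgebra.adjoin ℂ (a '' Iᶜ) := by
    intro p hp
    induction hp using Submodule.span_induction with
    | mem m hm =>
      obtain ⟨l, hlF, rfl⟩ := hm
      obtain ⟨t, ht, hcond⟩ := carAvg_prod hCAR₁ hCAR₂ σ hσ gl l
      rw [ht]
      by_cases ht0 : t = 0
      · rw [ht0, zero_smul]; exact zero_mem _
      · refine SMulMemClass.smul_mem _ (car_prod_mem_compl hCAR₁ hCAR₂ I l ?_)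
        intro g hgI hgIn
        have hgF : g.1 ∈ F := hlF g hgI
        have hggl : g ∈ gl := (hglmem g).mpr
          (Finset.mem_insert_of_mem (Finset.mem_filter.mpr ⟨hgF, hgIn⟩))
        have hcg := hcond ht0 g hggl
        have hc0 : ((i₀, false) : CarSite ν) ∈ gl :=
          (hglmem _).mpr (Finset.mem_insert_self _ _)
        have hcount0 : l.count ((i₀, false) : CarSite ν) = 0 := by
          apply List.count_eq_zero.mpr
          intro hmem
          exact hi₀.2 (hlF _ hmem)
        have hbase := hcond ht0 _ hc0
        rw [hcount0, Nat.add_zero] at hbase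
        -- hbase : σ * (-1)^l.length = 1 ; hcg : σ * (-1)^(l.length + count) = 1
        rw [pow_add, ← mul_assoc] at hcg
        rw [hbase, one_mul] at hcg
        -- hcg : (-1)^(count) = 1
        by_contra hodd
        rw [Nat.not_even_iff_odd] at hodd
        rw [hodd.neg_one_pow] at hcg
        norm_num at hcg
    | zero =>
      have : carAvg a σ gl (0 : A) = 0 := by
        have h := carAvg_smul (a := a) σ gl 0 (0 : A)
        simpa using h
      rw [this]; exact zero_mem _
    | add u v _ _ ihu ihv =>
      rw [carAvg_add]; exact add_mem ihu ihv
    | smul r u _ ihu =>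
      rw [carAvg_smul]; exact SMulMemClass.smul_mem _ ihu
  refine ⟨carAvg a σ gl q, havg q hqF, ?_⟩
  have hfix : carAvg a σ gl z = z := by
    apply carAvg_fix σ hσ2
    intro g hg
    exact hz g (hΛI _ ((hglmem g).mp hg))
  calc dist z (carAvg a σ gl q) = ‖z - carAvg a σ gl q‖ := dist_eq_norm _ _
    _ = ‖carAvg a σ gl (z - q)‖ := by rw [carAvg_sub, hfix]
    _ ≤ ‖z - q‖ := carAvg_norm_le σ hσ1 gl
        (fun g _ => carGen_norm_le hCAR₁ hCAR₂ g) _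
    _ < ε := by rwa [← dist_eq_norm]

include hCAR₁ hCAR₂ in
lemma car_conj_theta (Θ : A ≃⋆ₐ[ℂ] A) (hΘ : ∀ i, Θ (a i) = - a i)
    (I : Set (Fin ν → ℤ)) {u : A} (hu_star : star u = u) (hu_sq : u * u = 1)
    (hu : ∀ i ∈ I, u * a i = -(a i * u)) :
    ∀ z ∈ carSub a I, u * z * u = Θ z := by
  have hΘcont : Continuous Θ := (NonUnitalStarAlgHom.isometry Θ Θ.injective).continuous
  intro z hz
  have hset : (carSub a I : Set A) ⊆ {z | u * z * u = Θ z} := by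
    show closure (StarAlgebra.adjoin ℂ (a '' I) : Set A) ⊆ _
    apply closure_minimal
    · intro w hw
      rw [SetLike.mem_coe] at hw
      induction hw using StarAlgebra.adjoin_induction with
      | mem x hx =>
        obtain ⟨i, hi, rfl⟩ := hx
        show u * a i * u = Θ (a i)
        rw [hΘ i, hu i hi, neg_mul, mul_assoc, hu_sq, mul_one]
      | algebraMap r =>
        show u * algebraMap ℂ A r * u = Θ (algebraMap ℂ A r)
        rw [Algebra.algebraMap_eq_smul_one, mul_smul_comm, mul_one, smul_mul_assoc, hu_sq,
          map_smul, map_one]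
      | add x y _ _ ihx ihy =>
        show u * (x + y) * u = Θ (x + y)
        rw [mul_add, add_mul, map_add, ihx, ihy]
      | mul x y _ _ ihx ihy =>
        show u * (x * y) * u = Θ (x * y)
        rw [map_mul, ← ihx, ← ihy]
        have h1 : (u * x * u) * (u * y * u) = u * (x * ((u * u) * (y * u))) := by
          noncomm_ring
        rw [h1, hu_sq, one_mul]
        noncomm_ring
      | star x _ ihx =>
        show u * star x * u = Θ (star x)
        rw [map_star, ← ihx, star_mul, star_mul, hu_star, mul_assoc]
    · exact isClosed_eq (((continuous_const.mul continuous_id).mul continuous_const)) hΘcont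
  exact hset hz

omit hCAR₁ hCAR₂ in
lemma car_theta_gen (Θ : A ≃⋆ₐ[ℂ] A) (hΘ : ∀ i, Θ (a i) = - a i) (g : CarSite ν) :
    Θ (carGen a g) = -(carGen a g) := by
  rcases g with ⟨i, b⟩
  cases b
  · show Θ (a i + star (a i)) = -(a i + star (a i))
    rw [map_add, map_star, hΘ i, star_neg, neg_add]
  · show Θ (Complex.I • (a i - star (a i))) = -(Complex.I • (a i - star (a i)))
    rw [map_smul, map_sub, map_star, hΘ i, star_neg, ← smul_neg]
    congr 1
    abel

include hCAR₁ hCAR₂ in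
lemma car_gen_anticomm_a {g : CarSite ν} {i : Fin ν → ℤ} (hne : g.1 ≠ i) :
    carGen a g * a i = -(a i * carGen a g) := by
  have h1 : g ≠ (i, false) := fun h => hne (by rw [h])
  have h2 : g ≠ (i, true) := fun h => hne (by rw [h])
  rw [car_a_eq (a := a) i, mul_smul_comm, smul_mul_assoc]
  rw [mul_sub, sub_mul, mul_smul_comm, smul_mul_assoc,
    carGen_anticomm hCAR₁ hCAR₂ h1, carGen_anticomm hCAR₁ hCAR₂ h2]
  rw [← smul_neg]
  congr 1
  rw [smul_neg]
  abel

include hCAR₁ hCAR₂ in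
lemma car_even_comm (Θ : A ≃⋆ₐ[ℂ] A) (hΘ : ∀ i, Θ (a i) = - a i)
    (I : Set (Fin ν → ℤ)) {j : Fin ν → ℤ} (hj : j ∉ I) (b : Bool)
    {y : A} (hy : y ∈ carSub a I) (hyΘ : Θ y = y) :
    carGen a (j, b) * y = y * carGen a (j, b) := by
  set u := carGen a (j, b) with hu_def
  have hu_star : star u = u := carGen_star (j, b)
  have hu_sq : u * u = 1 := carGen_sq hCAR₁ hCAR₂ (j, b)
  have hu : ∀ i ∈ I, u * a i = -(a i * u) := by
    intro i hi
    exact car_gen_anticomm_a hCAR₁ hCAR₂ (fun h : j = i => hj (h ▸ hi))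
  have hconj := car_conj_theta hCAR₁ hCAR₂ Θ hΘ I hu_star hu_sq hu y hy
  rw [hyΘ] at hconj
  calc u * y = (u * y * u) * u := by rw [mul_assoc, hu_sq, mul_one]
    _ = y * u := by rw [hconj]

end Main

/-- In the CAR algebra `A` over `ℤ^ν`, for an infinite subset `I`, the
commutant of the even part `A(I)₊` in `A` equals `A(I^c)`. -/
theorem car_commutant_of_even_part_infinite
    {ν : ℕ} {A : Type*} [CStarAlgebra A]
    (a : (Fin ν → ℤ) → A)
    (hCAR₁ : ∀ i j, star (a i) * a j + a j * star (a i) = if i = j then (1 : A) else 0)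
    (hCAR₂ : ∀ i j, a i * a j + a j * a i = 0)
    (hgen : carSub a Set.univ = ⊤)
    (Θ : A ≃⋆ₐ[ℂ] A)
    (hΘ : ∀ i, Θ (a i) = - a i)
    (I : Set (Fin ν → ℤ)) (hI : I.Infinite) :
    ∀ x : A, (∀ y ∈ carSub a I, Θ y = y → x * y = y * x) ↔ x ∈ carSub a Iᶜ := by
  
  intro x
  constructor
  · -- forward direction
    intro hx
    -- x commutes with products of two generators over I
    have hsq : ∀ g : CarSite ν, carGen a g * carGen a g = 1 := carGen_sq hCAR₁ hCAR₂
    have hcomm2 : ∀ g h : CarSite ν, g.1 ∈ I → h.1 ∈ I →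
        x * (carGen a g * carGen a h) = (carGen a g * carGen a h) * x := by
      intro g h hg hh
      apply hx
      · exact mul_mem
          ((StarAlgebra.adjoin ℂ (a '' I)).le_topologicalClosure (carGen_mem_adjoin hg))
          ((StarAlgebra.adjoin ℂ (a '' I)).le_topologicalClosure (carGen_mem_adjoin hh))
      · rw [map_mul, car_theta_gen Θ hΘ, car_theta_gen Θ hΘ, neg_mul_neg]
    have hconj_eq : ∀ g h : CarSite ν, g.1 ∈ I → h.1 ∈ I →
        carGen a g * x * carGen a g = carGen a h * x * carGen a h := by
      intro g h hg hh
      have e1 : (carGen a g * x * carGen a g) * (carGen a h * carGen a h)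
          = (carGen a g * carGen a g) * (carGen a h * x * carGen a h) := by
        calc (carGen a g * x * carGen a g) * (carGen a h * carGen a h)
            = carGen a g * (x * (carGen a g * carGen a h)) * carGen a h := by noncomm_ring
          _ = carGen a g * ((carGen a g * carGen a h) * x) * carGen a h := by
              rw [hcomm2 g h hg hh]
          _ = (carGen a g * carGen a g) * (carGen a h * x * carGen a h) := by noncomm_ring
      rwa [hsq g, hsq h, mul_one, one_mul] at e1
    obtain ⟨i₁, hi₁⟩ := hI.nonempty
    set G₁ := carGen a (i₁, false) with hG₁
    set xt := G₁ * x * G₁ with hxt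
    have hconj : ∀ g : CarSite ν, g.1 ∈ I → carGen a g * x * carGen a g = xt :=
      fun g hg => hconj_eq g (i₁, false) hg hi₁
    have hconj' : ∀ g : CarSite ν, g.1 ∈ I → carGen a g * xt * carGen a g = x := by
      intro g hg
      rw [← hconj g hg]
      calc carGen a g * (carGen a g * x * carGen a g) * carGen a g
          = (carGen a g * carGen a g) * x * (carGen a g * carGen a g) := by noncomm_ring
        _ = x := by rw [hsq g, one_mul, mul_one]
    set x' := (2⁻¹ : ℂ) • (x + xt) with hx'
    set x'' := (2⁻¹ : ℂ) • (x - xt) with hx''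
    have hmem' : x' ∈ carSub a Iᶜ := by
      apply car_mem_compl_of_conj hCAR₁ hCAR₂ hgen I hI 1 (Or.inl rfl)
      intro g hg
      rw [one_smul, hx', mul_smul_comm, smul_mul_assoc]
      congr 1
      rw [mul_add, add_mul, hconj g hg, hconj' g hg, add_comm]
    have hmem'' : x'' ∈ carSub a Iᶜ := by
      apply car_mem_compl_of_conj hCAR₁ hCAR₂ hgen I hI (-1) (Or.inr rfl)
      intro g hg
      rw [hx'', mul_smul_comm, smul_mul_assoc, smul_smul]
      have : ((-1 : ℂ) * 2⁻¹) • (x - xt) = (2⁻¹ : ℂ) • (xt - x) := by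
        rw [show ((-1 : ℂ) * 2⁻¹) = -(2⁻¹ : ℂ) by ring, neg_smul, ← smul_neg, neg_sub]
      rw [this]
      congr 1
      rw [mul_sub, sub_mul, hconj g hg, hconj' g hg]
    have hxsum : x = x' + x'' := by
      rw [hx', hx'', ← smul_add]
      have : x + xt + (x - xt) = (2 : ℂ) • x := by
        rw [two_smul]; abel
      rw [this, smul_smul]
      norm_num
    rw [hxsum]
    exact add_mem hmem' hmem''
  · -- backward direction
    intro hx y hy hyΘ
    have heq : ∀ b : Bool, ∀ j ∉ I, ∀ w ∈ carSub a I, Θ w = w →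
        carGen a (j, b) * w = w * carGen a (j, b) :=
      fun b j hj w hw hwΘ => car_even_comm hCAR₁ hCAR₂ Θ hΘ I hj b hw hwΘ
    set T : Set A := {w | w * y = y * w ∧ w * star y = star y * w} with hT
    have hstar_y : star y ∈ carSub a I := star_mem hy
    have hstar_yΘ : Θ (star y) = star y := by rw [map_star, hyΘ]
    have hsubset : (carSub a Iᶜ : Set A) ⊆ T := by
      show closure (StarAlgebra.adjoin ℂ (a '' Iᶜ) : Set A) ⊆ T
      apply closure_minimal
      · intro w hw
        rw [SetLike.mem_coe] at hw
        induction hw using StarAlgebra.adjoin_induction with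
        | mem v hv =>
          obtain ⟨j, hj, rfl⟩ := hv
          have hcy : ∀ b, carGen a (j, b) * y = y * carGen a (j, b) :=
            fun b => heq b j hj y hy hyΘ
          have hcy' : ∀ b, carGen a (j, b) * star y = star y * carGen a (j, b) :=
            fun b => heq b j hj (star y) hstar_y hstar_yΘ
          constructor
          · rw [car_a_eq (a := a) j, smul_mul_assoc, mul_smul_comm, sub_mul, mul_sub,
              smul_mul_assoc, mul_smul_comm, hcy false, hcy true]
          · rw [car_a_eq (a := a) j, smul_mul_assoc, mul_smul_comm, sub_mul, mul_sub,
              smul_mul_assoc, mul_smul_comm, hcy' false, hcy' true]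
        | algebraMap r =>
          constructor <;> rw [Algebra.algebraMap_eq_smul_one, smul_mul_assoc, one_mul,
            mul_smul_comm, mul_one]
        | add v w _ _ ihv ihw =>
          exact ⟨by rw [add_mul, mul_add, ihv.1, ihw.1],
            by rw [add_mul, mul_add, ihv.2, ihw.2]⟩
        | mul v w _ _ ihv ihw =>
          constructor
          · rw [mul_assoc, ihw.1, ← mul_assoc, ihv.1, mul_assoc]
          · rw [mul_assoc, ihw.2, ← mul_assoc, ihv.2, mul_assoc]
        | star v _ ihv =>
          constructor
          · have := congrArg star ihv.2
            rw [star_mul, star_mul, star_star] at this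
            exact this.symm
          · have := congrArg star ihv.1
            rw [star_mul, star_mul] at this
            exact this.symm
      · exact IsClosed.inter
          (isClosed_eq (continuous_id.mul continuous_const)
            (continuous_const.mul continuous_id))
          (isClosed_eq (continuous_id.mul continuous_const)
            (continuous_const.mul continuous_id))
    exact (hsubset hx).1
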